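/- Two finite complex sequences a, b ∈ ℂ^{N+1} are discrete ambiguity partners (i.e., |𝒜(a)(k,t)| = |𝒜(b)(k,t)| for all k ∈ ℤ, t ∈ ℝ) if and only if K_a* K_a = K_b* K_b, where K_a is the ambiguity matrix of a. -/

import Mathlib

noncomputable def discAmb (a : ℤ → ℂ) (k : ℤ) (t : ℝ) : ℂ :=
  ∑ᶠ j : ℤ, a j * (starRingEnd ℂ) (a (j - k)) * Complex.exp (Complex.I * j * t)

noncomputable def ambMatrix (d : ℤ → ℂ) (j k : ℤ) : ℂ :=
  if (j + k) % 2 = 0 then d ((j + k) / 2) * d ((j - k) / 2) else 0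

noncomputable def Cc (a : ℤ → ℂ) (N : ℕ) (k m : ℤ) : ℂ :=
  ∑ J ∈ Finset.Icc (0:ℤ) N, a J * (starRingEnd ℂ) (a (J - k)) *
    (starRingEnd ℂ) (a (J - m)) * a (J - m - k)

section Lemmas



lemma expI_injOn : Set.InjOn (fun t : ℝ => Complex.exp (Complex.I * t)) (Set.Ioo 0 1) := by
  intro s hs t ht h
  simp only at h
  have h1 : Complex.exp (Complex.I * s - Complex.I * t) = 1 := by
    rw [Complex.exp_sub, h, div_self (Complex.exp_ne_zero _)]
  rw [Complex.exp_eq_one_iff] at h1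
  obtain ⟨n, hn⟩ := h1
  have h2 : (Complex.I : ℂ) ≠ 0 := Complex.I_ne_zero
  have h3 : (s : ℂ) - t = n * (2 * Real.pi) := by
    have : Complex.I * ((s:ℂ) - t) = Complex.I * (n * (2 * Real.pi)) := by
      rw [mul_sub, hn]; ring
    exact mul_left_cancel₀ h2 this
  have h4 : (s : ℝ) - t = n * (2 * Real.pi) := by
    exact_mod_cast h3
  have hpi := Real.pi_gt_three
  obtain ⟨hs1, hs2⟩ := hs; obtain ⟨ht1, ht2⟩ := ht
  have hn0 : n = 0 := by
    rcases lt_trichotomy n 0 with h | h | h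
    · have : (n:ℝ) ≤ -1 := by exact_mod_cast (by omega : n ≤ -1)
      nlinarith
    · exact h
    · have : (1:ℝ) ≤ n := by exact_mod_cast h
      nlinarith
  rw [hn0] at h4; simp at h4; linarith

lemma trig_zero (N : ℕ) (c : ℤ → ℂ)
    (h : ∀ t : ℝ, ∑ m ∈ Finset.Icc (-(N:ℤ)) N, c m * Complex.exp (Complex.I * m * t) = 0) :
    ∀ m ∈ Finset.Icc (-(N:ℤ)) N, c m = 0 := by
  set S := Finset.Icc (-(N:ℤ)) N with hS
  set p : Polynomial ℂ := ∑ m ∈ S, Polynomial.C (c m) * Polynomial.X ^ (m + N).toNat with hp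
  have heval : ∀ t : ℝ, p.eval (Complex.exp (Complex.I * t)) = 0 := by
    intro t
    have : p.eval (Complex.exp (Complex.I * t))
        = Complex.exp (Complex.I * N * t) * ∑ m ∈ S, c m * Complex.exp (Complex.I * m * t) := by
      rw [hp, Polynomial.eval_finset_sum, Finset.mul_sum]
      apply Finset.sum_congr rfl
      intro m hm
      have hm' : (0:ℤ) ≤ m + N := by
        simp [hS] at hm; omega
      rw [Polynomial.eval_mul, Polynomial.eval_C, Polynomial.eval_pow, Polynomial.eval_X,
        ← Complex.exp_nat_mul]
      have : ((m + (N:ℤ)).toNat : ℂ) * (Complex.I * t) = Complex.I * N * t + Complex.I * m * t := by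
        have : (((m + (N:ℤ)).toNat : ℤ) : ℂ) = (m : ℂ) + N := by
          rw [Int.toNat_of_nonneg hm']; push_cast; ring
        push_cast at this ⊢
        rw [this]; ring
      rw [this, Complex.exp_add]; ring
    rw [this, h t, mul_zero]
  have hp0 : p = 0 := by
    apply Polynomial.eq_zero_of_infinite_isRoot
    apply Set.Infinite.mono (s := (fun t : ℝ => Complex.exp (Complex.I * t)) '' Set.Ioo 0 1)
    · rintro z ⟨t, _, rfl⟩
      exact heval t
    · exact Set.Infinite.image expI_injOn (Set.Ioo_infinite (by norm_num))
  intro m hm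
  have hm' : (0:ℤ) ≤ m + N := by simp [hS] at hm; omega
  have := congrArg (fun q => Polynomial.coeff q (m + N).toNat) hp0
  simp only [hp, Polynomial.finset_sum_coeff, Polynomial.coeff_C_mul, Polynomial.coeff_X_pow,
    Polynomial.coeff_zero] at this
  rw [Finset.sum_eq_single m] at this
  · simpa using this
  · intro m' hm' hne
    have : ¬ ((m + ↑N).toNat = (m' + ↑N).toNat) := by
      simp [hS] at hm'
      intro hcontra
      omega
    simp [mul_ite, this]
  · intro hc; exact absurd hm hc


lemma discAmb_eq (N : ℕ) (a : ℤ → ℂ) (hsa : ∀ j : ℤ, a j ≠ 0 → 0 ≤ j ∧ j ≤ N)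
    (k : ℤ) (t : ℝ) :
    discAmb a k t = ∑ j ∈ Finset.Icc (0:ℤ) N,
      a j * (starRingEnd ℂ) (a (j - k)) * Complex.exp (Complex.I * j * t) := by
  apply finsum_eq_finset_sum_of_support_subset
  intro j hj
  simp only [Function.mem_support] at hj
  have : a j ≠ 0 := by intro h; apply hj; simp [h]
  have := hsa j this
  simp [Finset.mem_Icc]; omega

lemma prod_expand (N : ℕ) (a : ℤ → ℂ) (hsa : ∀ j : ℤ, a j ≠ 0 → 0 ≤ j ∧ j ≤ N)
    (k : ℤ) (t : ℝ) :
    discAmb a k t * (starRingEnd ℂ) (discAmb a k t)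
      = ∑ m ∈ Finset.Icc (-(N:ℤ)) N, Cc a N k m * Complex.exp (Complex.I * m * t) := by
  set conj := starRingEnd ℂ
  set x : ℤ → ℂ := fun j => a j * conj (a (j - k)) with hx
  rw [discAmb_eq N a hsa k t]
  rw [map_sum]
  rw [Finset.sum_mul_sum]
  have hterm : ∀ j j' : ℤ,
      (a j * conj (a (j - k)) * Complex.exp (Complex.I * j * t)) *
        conj (a j' * conj (a (j' - k)) * Complex.exp (Complex.I * j' * t))
      = x j * conj (x j') * Complex.exp (Complex.I * (j - j') * t) := by
    intro j j'
    have hconjexp : conj (Complex.exp (Complex.I * j' * t)) = Complex.exp (-(Complex.I * j' * t)) := by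
      rw [← Complex.exp_conj]
      congr 1
      simp [Complex.conj_I]
    rw [map_mul, map_mul, hconjexp, hx]
    simp only [map_mul, RingHomCompTriple.comp_apply, RingHom.id_apply, starRingEnd_self_apply]
    rw [show Complex.exp (Complex.I * ((j:ℂ) - (j':ℂ)) * t)
        = Complex.exp (Complex.I * j * t) * Complex.exp (-(Complex.I * j' * t)) by
      rw [← Complex.exp_add]; congr 1; push_cast; ring]
    ring
  calc ∑ j ∈ Finset.Icc (0:ℤ) N, ∑ j' ∈ Finset.Icc (0:ℤ) N,
        (a j * conj (a (j - k)) * Complex.exp (Complex.I * j * t)) *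
          conj (a j' * conj (a (j' - k)) * Complex.exp (Complex.I * j' * t))
      = ∑ j ∈ Finset.Icc (0:ℤ) N, ∑ m ∈ Finset.Icc (-(N:ℤ)) N,
          x j * conj (x (j - m)) * Complex.exp (Complex.I * m * t) := by
        apply Finset.sum_congr rfl
        intro j hj
        simp only [Finset.mem_Icc] at hj
        rw [show (∑ j' ∈ Finset.Icc (0:ℤ) N,
            (a j * conj (a (j - k)) * Complex.exp (Complex.I * j * t)) *
              conj (a j' * conj (a (j' - k)) * Complex.exp (Complex.I * j' * t)))
          = ∑ j' ∈ Finset.Icc (0:ℤ) N, x j * conj (x j') * Complex.exp (Complex.I * (j - j') * t) from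
          Finset.sum_congr rfl fun j' _ => hterm j j']
        rw [show (∑ j' ∈ Finset.Icc (0:ℤ) N, x j * conj (x j') * Complex.exp (Complex.I * (j - j') * t))
            = ∑ m ∈ (Finset.Icc (0:ℤ) N).image (fun j' => j - j'),
                x j * conj (x (j - m)) * Complex.exp (Complex.I * m * t) by
          rw [Finset.sum_image (by intro u _ v _ h; have h' : j - u = j - v := h; omega)]
          apply Finset.sum_congr rfl
          intro j' _
          rw [show j - (j - j') = j' from by omega]
          congr 2
          push_cast
          ring]
        apply Finset.sum_subset
        · intro m hm
          simp only [Finset.mem_image, Finset.mem_Icc] at hm ⊢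
          obtain ⟨j', hj', rfl⟩ := hm
          omega
        · intro m hm hnot
          have : a (j - m) = 0 := by
            by_contra hne
            apply hnot
            have := hsa _ hne
            simp only [Finset.mem_image, Finset.mem_Icc]
            exact ⟨j - m, by omega, by omega⟩
          simp [hx, this]
    _ = ∑ m ∈ Finset.Icc (-(N:ℤ)) N, Cc a N k m * Complex.exp (Complex.I * m * t) := by
        rw [Finset.sum_comm]
        apply Finset.sum_congr rfl
        intro m _
        rw [Cc, Finset.sum_mul]
        apply Finset.sum_congr rfl
        intro J _
        simp only [hx, map_mul, RingHomCompTriple.comp_apply, RingHom.id_apply,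
          starRingEnd_self_apply]
        ring


lemma ambMatrix_support (N : ℕ) (a : ℤ → ℂ) (hsa : ∀ j : ℤ, a j ≠ 0 → 0 ≤ j ∧ j ≤ N)
    (l i : ℤ) (h : ambMatrix a l i ≠ 0) : 0 ≤ l ∧ l ≤ 2 * N := by
  rw [ambMatrix] at h
  by_cases hp : (l + i) % 2 = 0
  · rw [if_pos hp] at h
    have h1 : a ((l + i) / 2) ≠ 0 := fun hc => h (by rw [hc, zero_mul])
    have h2 : a ((l - i) / 2) ≠ 0 := fun hc => h (by rw [hc, mul_zero])
    have := hsa _ h1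
    have := hsa _ h2
    omega
  · rw [if_neg hp] at h; exact absurd rfl h

lemma amb_parity_zero (a : ℤ → ℂ) (i j l : ℤ) (hp : (i + j) % 2 ≠ 0) :
    (starRingEnd ℂ) (ambMatrix a l i) * ambMatrix a l j = 0 := by
  rw [ambMatrix, ambMatrix]
  by_cases h1 : (l + i) % 2 = 0
  · have h2 : ¬ (l + j) % 2 = 0 := by omega
    rw [if_pos h1, if_neg h2, mul_zero]
  · rw [if_neg h1, map_zero, zero_mul]

lemma G_eq_Cc (N : ℕ) (a : ℤ → ℂ) (hsa : ∀ j : ℤ, a j ≠ 0 → 0 ≤ j ∧ j ≤ N) (k m : ℤ) :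
    ∑ᶠ l : ℤ, (starRingEnd ℂ) (ambMatrix a l (m - k)) * ambMatrix a l (m + k)
      = Cc a N k m := by
  set F : ℤ → ℂ := fun l => (starRingEnd ℂ) (ambMatrix a l (m - k)) * ambMatrix a l (m + k)
    with hF
  set T : Finset ℤ := Finset.Icc (0:ℤ) (2 * N) ∪ (Finset.Icc (0:ℤ) N).image
    (fun J => 2 * J - m - k) with hT
  have hfin : ∑ᶠ l : ℤ, F l = ∑ l ∈ T, F l := by
    apply finsum_eq_finset_sum_of_support_subset
    intro l hl
    simp only [Function.mem_support, hF] at hl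
    have : ambMatrix a l (m - k) ≠ 0 := fun hc => hl (by rw [hc, map_zero, zero_mul])
    have := ambMatrix_support N a hsa l (m - k) this
    simp only [hT, Finset.coe_union, Set.mem_union, Finset.coe_Icc, Set.mem_Icc]
    left; omega
  rw [hfin, Cc]
  symm
  apply Finset.sum_of_injOn (fun J => 2 * J - m - k)
  · intro u _ v _ h; simp at h; omega
  · intro J hJ
    simp only [Finset.coe_Icc, Set.mem_Icc] at hJ
    simp only [hT, Finset.coe_union, Set.mem_union, Finset.coe_image, Set.mem_image,
      Finset.coe_Icc, Set.mem_Icc]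
    right; exact ⟨J, hJ, rfl⟩
  · -- vanishing off the image
    intro l _ hlnot
    by_cases hp : (l + (m + k)) % 2 = 0
    · -- l = 2J - m - k with J = (l+m+k)/2 ; must have J ∉ Icc 0 N
      obtain ⟨J, hl2⟩ : ∃ J, l = 2 * J - m - k := ⟨(l + m + k) / 2, by omega⟩
      have hJnot : ¬ (0 ≤ J ∧ J ≤ N) := by
        intro hc
        apply hlnot
        simp only [Set.mem_image, Finset.coe_Icc, Set.mem_Icc]
        exact ⟨J, hc, by omega⟩
      -- then a J = 0, and ambMatrix a l (m+k) has factor a ((l+m+k)/2) = a J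
      have haJ : a J = 0 := by
        by_contra hne; exact hJnot (hsa _ hne)
      rw [hF]
      simp only
      rw [show ambMatrix a l (m + k) = 0 by
        rw [ambMatrix, if_pos hp, show (l + (m + k)) / 2 = J by omega, haJ, zero_mul]]
      rw [mul_zero]
    · have h1 : ¬ (l + (m - k)) % 2 = 0 := by omega
      rw [hF]
      simp only
      rw [show ambMatrix a l (m - k) = 0 by rw [ambMatrix, if_neg h1], map_zero, zero_mul]
  · -- term match
    intro J hJ
    simp only [Finset.mem_Icc] at hJ
    rw [hF]
    simp only
    rw [show ambMatrix a (2 * J - m - k) (m - k) = a (J - k) * a (J - m) by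
      rw [ambMatrix, if_pos (by omega)]
      congr 2 <;> omega]
    rw [show ambMatrix a (2 * J - m - k) (m + k) = a J * a (J - m - k) by
      rw [ambMatrix, if_pos (by omega)]
      congr 2 <;> omega]
    rw [map_mul]
    ring


lemma Cc_zero (N : ℕ) (a : ℤ → ℂ) (hsa : ∀ j : ℤ, a j ≠ 0 → 0 ≤ j ∧ j ≤ N)
    (k m : ℤ) (hm : (N:ℤ) < m ∨ m < -(N:ℤ)) : Cc a N k m = 0 := by
  apply Finset.sum_eq_zero
  intro J hJ
  simp only [Finset.mem_Icc] at hJ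
  have : a (J - m) = 0 := by
    by_contra h
    have := hsa _ h
    omega
  rw [this, map_zero, mul_zero, zero_mul]

end Lemmas

theorem stmt14 (N : ℕ) (a b : ℤ → ℂ)
    (hsa : ∀ j : ℤ, a j ≠ 0 → 0 ≤ j ∧ j ≤ N)
    (hsb : ∀ j : ℤ, b j ≠ 0 → 0 ≤ j ∧ j ≤ N) :
    (∀ (k : ℤ) (t : ℝ), ‖discAmb a k t‖ = ‖discAmb b k t‖) ↔
      (∀ i j : ℤ,
        ∑ᶠ l : ℤ, (starRingEnd ℂ) (ambMatrix a l i) * ambMatrix a l j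
          = ∑ᶠ l : ℤ, (starRingEnd ℂ) (ambMatrix b l i) * ambMatrix b l j) := by
  constructor
  · intro habs i j
    by_cases hp : (i + j) % 2 = 0
    · obtain ⟨m, k, hi, hj⟩ : ∃ m k : ℤ, i = m - k ∧ j = m + k :=
        ⟨(i + j) / 2, (j - i) / 2, by omega, by omega⟩
      rw [hi, hj, G_eq_Cc N a hsa k m, G_eq_Cc N b hsb k m]
      by_cases hm : -(N:ℤ) ≤ m ∧ m ≤ N
      · have key : ∀ t : ℝ, ∑ m' ∈ Finset.Icc (-(N:ℤ)) N,
            (Cc a N k m' - Cc b N k m') * Complex.exp (Complex.I * m' * t) = 0 := by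
          intro t
          have h1 := prod_expand N a hsa k t
          have h2 := prod_expand N b hsb k t
          have h3 : discAmb a k t * (starRingEnd ℂ) (discAmb a k t)
              = discAmb b k t * (starRingEnd ℂ) (discAmb b k t) := by
            rw [Complex.mul_conj, Complex.mul_conj]
            norm_cast
            rw [← Complex.sq_norm, ← Complex.sq_norm, habs]
          rw [h1, h2] at h3
          calc ∑ m' ∈ Finset.Icc (-(N:ℤ)) N,
                (Cc a N k m' - Cc b N k m') * Complex.exp (Complex.I * m' * t)
              = (∑ m' ∈ Finset.Icc (-(N:ℤ)) N, Cc a N k m' * Complex.exp (Complex.I * m' * t))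
                - ∑ m' ∈ Finset.Icc (-(N:ℤ)) N, Cc b N k m' * Complex.exp (Complex.I * m' * t) := by
                rw [← Finset.sum_sub_distrib]
                apply Finset.sum_congr rfl
                intro m' _
                ring
            _ = 0 := by rw [h3, sub_self]
        have := trig_zero N (fun m' => Cc a N k m' - Cc b N k m') key m
          (by simp only [Finset.mem_Icc]; omega)
        simpa [sub_eq_zero] using this
      · rw [Cc_zero N a hsa k m (by omega), Cc_zero N b hsb k m (by omega)]
    · rw [finsum_eq_zero_of_forall_eq_zero (fun l => amb_parity_zero a i j l hp),
        finsum_eq_zero_of_forall_eq_zero (fun l => amb_parity_zero b i j l hp)]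
  · intro hG k t
    have hCc : ∀ m : ℤ, Cc a N k m = Cc b N k m := by
      intro m
      rw [← G_eq_Cc N a hsa k m, ← G_eq_Cc N b hsb k m]
      exact hG (m - k) (m + k)
    have h3 : discAmb a k t * (starRingEnd ℂ) (discAmb a k t)
        = discAmb b k t * (starRingEnd ℂ) (discAmb b k t) := by
      rw [prod_expand N a hsa k t, prod_expand N b hsb k t]
      exact Finset.sum_congr rfl fun m _ => by rw [hCc m]
    rw [Complex.mul_conj, Complex.mul_conj] at h3
    have h4 : Complex.normSq (discAmb a k t) = Complex.normSq (discAmb b k t) := by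
      exact_mod_cast h3
    rw [Complex.norm_def, Complex.norm_def, h4]
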